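/- Suppose a history σ of clients C_1, C_2 on registers X_1 (written by C_1) and X_2 (written by C_2) is fork-sequentially-consistent with views π_1, π_2. Assume: C_2's operations in σ are, in order, writes w^1,...,w^{z-1} to X_2 of distinct values v_1,...,v_{z-1} interleaved with reads r^1,...,r^z of X_1, where r^1,...,r^{z-1} return ⊥ and r^z returns u ≠ ⊥; C_1's operations in σ are a write w_1 of u to X_1 followed by reads of X_2, the last of which, r^l, returns v_{z-2}; and w_1 precedes r^l in σ. Then a contradiction follows; i.e., no such fork-sequentially-consistent history exists. -/

import Mathlib

/-- Data of a register operation: the register it accesses, whether it is a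
write, and its value (`some v` = value written / returned; `none` = ⊥). -/
structure OpData (Reg Val : Type) where
  reg : Reg
  isWrite : Bool
  val : Option Val

variable {Op Reg Val : Type}

/-- `o` is a write operation to register `X`. -/
def isWr (d : Op → OpData Reg Val) (X : Reg) (o : Op) : Prop :=
  (d o).reg = X ∧ (d o).isWrite = true

/-- `o` is a read operation of register `X`. -/
def isRd (d : Op → OpData Reg Val) (X : Reg) (o : Op) : Prop :=
  (d o).reg = X ∧ (d o).isWrite = false

/-- A sequential sequence `π` satisfies the sequential specification of
register `X`: every read of `X` returns the value of the most recent
preceding write to `X`, or the initial value ⊥ (`none`) if there is none. -/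
def SeqSpec (d : Op → OpData Reg Val) (X : Reg) (π : List Op) : Prop :=
  ∀ l1 o l2, π = l1 ++ o :: l2 → isRd d X o →
    ((∀ w ∈ l1, ¬ isWr d X w) ∧ (d o).val = none) ∨
    (∃ a w b, l1 = a ++ w :: b ∧ isWr d X w ∧ (d w).val = (d o).val ∧
      ∀ w' ∈ b, ¬ isWr d X w')

/-- `pfx π o` is the prefix of `π` ending with `o` (i.e. `π^o`). -/
def pfx [DecidableEq Op] (π : List Op) (o : Op) : List Op :=
  π.take (π.idxOf o + 1)

/-- The no-join property: for every operation in both sequences, the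
prefixes ending at it coincide. -/
def NoJoin [DecidableEq Op] (π₁ π₂ : List Op) : Prop :=
  ∀ o, o ∈ π₁ → o ∈ π₂ → pfx π₁ o = pfx π₂ o

/-- `o` occurs strictly before `o'` in the sequence `π`. -/
def before [DecidableEq Op] (π : List Op) (o o' : Op) : Prop :=
  o ∈ π ∧ o' ∈ π ∧ π.idxOf o < π.idxOf o'

section Helpers

variable {α : Type*} [DecidableEq α]

/-- membership in a take from index bound -/
lemma mem_take_of_indexOf_lt {l : List α} {a : α} {n : ℕ} (ha : a ∈ l)
    (h : l.idxOf a < n) : a ∈ l.take n := by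
  have hlt : l.idxOf a < l.length := List.idxOf_lt_length_iff.2 ha
  have : (l.take n)[l.idxOf a]'(by simpa [List.length_take] using ⟨h, hlt⟩) = a := by
    rw [List.getElem_take]
    exact List.getElem_idxOf hlt
  exact this ▸ List.getElem_mem _

lemma indexOf_take {l : List α} {a : α} {n : ℕ} (h : a ∈ l.take n) :
    l.idxOf a = (l.take n).idxOf a := by
  conv_lhs => rw [← List.take_append_drop n l]
  exact List.idxOf_append_of_mem h

/-- decompose a list at an element -/
lemma decomp_at {l : List α} {a : α} (h : a ∈ l) :
    l = l.take (l.idxOf a) ++ a :: l.drop (l.idxOf a + 1) := by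
  have hlt : l.idxOf a < l.length := List.idxOf_lt_length_iff.2 h
  conv_lhs => rw [← List.take_append_drop (l.idxOf a) l]
  rw [List.drop_eq_getElem_cons hlt, List.getElem_idxOf hlt]

end Helpers

theorem fork_seq_consistency_blocking
    {Op Reg Val : Type} [DecidableEq Op] (d : Op → OpData Reg Val)
    (X1 X2 : Reg) (hX : X1 ≠ X2)
    (z : ℕ) (hz : 3 ≤ z)
    (w r : ℕ → Op) (v : ℕ → Val) (w1 rl : Op) (u : Val)
    (π1 π2 : List Op) (hnd1 : π1.Nodup) (hnd2 : π2.Nodup)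
    (hNJ12 : NoJoin π1 π2) (hNJ21 : NoJoin π2 π1)
    (hspec1 : ∀ X, SeqSpec d X π1) (hspec2 : ∀ X, SeqSpec d X π2)
    -- C₂'s operations:
    (hw : ∀ k, 1 ≤ k → k ≤ z - 1 → isWr d X2 (w k) ∧ (d (w k)).val = some (v k))
    (hr : ∀ k, 1 ≤ k → k ≤ z - 1 → isRd d X1 (r k) ∧ (d (r k)).val = none)
    (hrz : isRd d X1 (r z) ∧ (d (r z)).val = some u)
    -- C₂'s real-time order, preserved in its view π₂:
    (hord1 : ∀ k, 1 ≤ k → k ≤ z - 1 → before π2 (w k) (r k))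
    (hord2 : ∀ k, 1 ≤ k → k ≤ z - 2 → before π2 (r k) (w (k + 1)))
    (hord3 : before π2 (r (z - 1)) (r z))
    -- C₁'s operations and real-time order, preserved in its view π₁:
    (hw1 : isWr d X1 w1 ∧ (d w1).val = some u)
    (hrl : isRd d X2 rl ∧ (d rl).val = some (v (z - 2)))
    (hord4 : before π1 w1 rl)
    -- distinctness of written values:
    (huuniq : ∀ o, (o ∈ π1 ∨ o ∈ π2) → isWr d X1 o → (d o).val = some u → o = w1)
    (hvuniq : ∀ o, (o ∈ π1 ∨ o ∈ π2) → isWr d X2 o →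
      (d o).val = some (v (z - 2)) → o = w (z - 2))
    (hvinj : Function.Injective v)
    -- writes always write actual values (⊥ is not in the domain):
    (hsome : ∀ o : Op, (d o).isWrite = true → (d o).val ≠ none) :
    False := by
  have h1 : 1 ≤ z - 1 := by omega
  have h2 : 1 ≤ z - 2 := by omega
  have hz2 : z - 2 ≤ z - 1 := by omega
  have hsucc : z - 2 + 1 = z - 1 := by omega
  obtain ⟨hrz1, hrz2⟩ := hrz
  obtain ⟨hw11, hw12⟩ := hw1
  obtain ⟨hrl1, hrl2⟩ := hrl
  have hordA := hord1 (z - 1) h1 le_rfl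
  have hordB := hord1 (z - 2) h2 hz2
  have hordC := hord2 (z - 2) h2 le_rfl
  rw [hsucc] at hordC
  -- Step 1: w1 ∈ π2
  have hrzmem : r z ∈ π2 := hord3.2.1
  have hdec := decomp_at hrzmem
  have hw1mem2 : w1 ∈ π2 := by
    rcases hspec2 X1 _ (r z) _ hdec hrz1 with ⟨_, hnone⟩ | ⟨a, ww, b, hl1, hwwr, hwwval, _⟩
    · rw [hrz2] at hnone; exact absurd hnone (by simp)
    · have hwwmem : ww ∈ π2 := List.mem_of_mem_take (hl1 ▸ (by simp : ww ∈ a ++ ww :: b))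
      have : ww = w1 := huuniq ww (Or.inr hwwmem) hwwr (hwwval.trans hrz2)
      exact this ▸ hwwmem
  -- Step 2: r (z-1) is before w1 in π2
  have hrz1mem : r (z - 1) ∈ π2 := hord3.1
  have hdec2 := decomp_at hrz1mem
  have hlt2 : π2.idxOf (r (z - 1)) < π2.idxOf w1 := by
    rcases hspec2 X1 _ (r (z - 1)) _ hdec2 (hr (z - 1) h1 le_rfl).1 with
      ⟨hnowr, _⟩ | ⟨a, ww, b, hl1, hwwr, hwwval, _⟩
    · have hnot : w1 ∉ π2.take (π2.idxOf (r (z - 1))) := fun hmem =>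
        hnowr w1 hmem ⟨hw11.1, hw11.2⟩
      have hle : π2.idxOf (r (z - 1)) ≤ π2.idxOf w1 := by
        by_contra hc
        exact hnot (mem_take_of_indexOf_lt hw1mem2 (by omega))
      have hne : π2.idxOf w1 ≠ π2.idxOf (r (z - 1)) := by
        intro he
        have := (List.idxOf_inj hw1mem2).1 he
        have h1' : (d w1).isWrite = true := hw11.2
        rw [this, (hr (z - 1) h1 le_rfl).1.2] at h1'
        exact absurd h1' (by simp)
      omega
    · exfalso
      exact hsome ww hwwr.2 (hwwval.trans (hr (z - 1) h1 le_rfl).2)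
  -- Step 3: no-join
  have hpfx : pfx π1 w1 = pfx π2 w1 := hNJ12 w1 hord4.1 hw1mem2
  -- Step 4: index transfer
  have key : ∀ o, o ∈ π2 → π2.idxOf o ≤ π2.idxOf w1 →
      o ∈ π1 ∧ π1.idxOf o = π2.idxOf o := by
    intro o ho hle
    have h2t : o ∈ π2.take (π2.idxOf w1 + 1) := mem_take_of_indexOf_lt ho (by omega)
    have h1t : o ∈ π1.take (π1.idxOf w1 + 1) := by
      have : o ∈ pfx π1 w1 := hpfx ▸ h2t
      exact this
    refine ⟨List.mem_of_mem_take h1t, ?_⟩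
    have e1 := indexOf_take h1t
    have e2 := indexOf_take h2t
    rw [e1, e2]
    show (pfx π1 w1).idxOf o = (pfx π2 w1).idxOf o
    rw [hpfx]
  have c1 := hordB.2.2
  have c2 := hordC.2.2
  have c3 := hordA.2.2
  obtain ⟨hm2, he2⟩ := key (w (z - 2)) hordB.1 (by omega)
  obtain ⟨hm1, he1⟩ := key (w (z - 1)) hordA.1 (by omega)
  have hlt12 : π1.idxOf (w (z - 2)) < π1.idxOf (w (z - 1)) := by
    omega
  obtain ⟨-, he3⟩ := key w1 hw1mem2 le_rfl
  have hlt1rl : π1.idxOf (w (z - 1)) < π1.idxOf rl := by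
    have := hord4.2.2
    omega
  -- Step 5: the read rl in π1
  have hrlmem : rl ∈ π1 := hord4.2.1
  have hdec3 := decomp_at hrlmem
  rcases hspec1 X2 _ rl _ hdec3 hrl1 with ⟨_, hnone⟩ | ⟨a, ww, b, hl1, hwwr, hwwval, hnob⟩
  · rw [hrl2] at hnone; exact absurd hnone (by simp)
  have hwwmem : ww ∈ π1 := List.mem_of_mem_take (hl1 ▸ (by simp : ww ∈ a ++ ww :: b))
  have hwweq : ww = w (z - 2) := hvuniq ww (Or.inl hwwmem) hwwr (hwwval.trans hrl2)
  subst hwweq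
  have hwz1mem : w (z - 1) ∈ π1.take (π1.idxOf rl) := mem_take_of_indexOf_lt hm1 hlt1rl
  rw [hl1] at hwz1mem
  have hndl1 : (a ++ w (z - 2) :: b).Nodup := hl1 ▸ (hnd1.sublist (List.take_sublist _ _))
  rcases List.mem_append.1 hwz1mem with hina | hincons
  · -- w (z-1) ∈ a : index contradiction
    have hA : π1.idxOf (w (z - 1)) = (a ++ w (z - 2) :: b).idxOf (w (z - 1)) := by
      rw [← hl1]; exact indexOf_take (hl1 ▸ hwz1mem)
    have hB : π1.idxOf (w (z - 2)) = (a ++ w (z - 2) :: b).idxOf (w (z - 2)) := by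
      rw [← hl1]
      exact indexOf_take (hl1 ▸ (by simp : w (z - 2) ∈ a ++ w (z - 2) :: b))
    have hnotina : w (z - 2) ∉ a := fun hmem =>
      (List.nodup_append.1 hndl1).2.2 _ hmem _ List.mem_cons_self rfl
    have hBval : (a ++ w (z - 2) :: b).idxOf (w (z - 2)) = a.length := by
      rw [List.idxOf_append_of_notMem hnotina, List.idxOf_cons_self]
      simp
    have hAval : (a ++ w (z - 2) :: b).idxOf (w (z - 1)) < a.length := by
      rw [List.idxOf_append_of_mem hina]
      exact List.idxOf_lt_length_iff.2 hina
    omega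
  rcases List.mem_cons.1 hincons with heq | hinb
  · -- w (z-1) = w (z-2) : value injectivity contradiction
    have : some (v (z - 1)) = some (v (z - 2)) := by
      rw [← (hw (z - 1) h1 le_rfl).2, ← (hw (z - 2) h2 hz2).2, heq]
    have := hvinj (Option.some_injective _ this)
    omega
  · exact hnob _ hinb (hw (z - 1) h1 le_rfl).1
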